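/- For every nonnegative integer k and all positive integers l_1,…,l_k there exists a finite acyclic quiver E with exactly one sink v such that: the trivial path at v is the only path of length 0 ending at v; for each i = 1,…,k, the number of paths of length i ending at v equals l_i; and no path of length greater than k ends at v. In particular the total number of paths ending at v is 1 + l_1 + … + l_k. -/

import Mathlib

/-- A quiver (directed graph): vertices, edges, source and range maps. -/
structure Quiv where
  V : Type
  E : Type
  src : E → V
  rng : E → V

namespace Quiv

/-- `es` is a path from `u` to `v` (the empty list is the trivial path at `v`,
in which case `u = v`; a nonempty list is a path `e₁…eₙ` with
`rng eₜ = src eₜ₊₁`, starting at `src e₁ = u` and ending at `rng eₙ = v`). -/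
def IsPathFromTo (G : Quiv) (u : G.V) (es : List G.E) (v : G.V) : Prop :=
  es.Chain' (fun e f => G.rng e = G.src f) ∧
  (es = [] → u = v) ∧
  (∀ e, es.head? = some e → G.src e = u) ∧
  (∀ e, es.getLast? = some e → G.rng e = v)

/-- `es` is a path ending at `v`. -/
def IsPathTo (G : Quiv) (es : List G.E) (v : G.V) : Prop :=
  ∃ u, G.IsPathFromTo u es v

/-- A sink is a vertex emitting no edges. -/
def IsSink (G : Quiv) (v : G.V) : Prop := ∀ e : G.E, G.src e ≠ v

/-- A cycle: a path of positive length ending at its own source, in which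
distinct edges have distinct sources. -/
def IsCycle (G : Quiv) (es : List G.E) : Prop :=
  es ≠ [] ∧ (∃ u, G.IsPathFromTo u es u) ∧
  ∀ e ∈ es, ∀ f ∈ es, e ≠ f → G.src e ≠ G.src f

end Quiv

namespace Stmt8Aux

variable (k : ℕ) (l : ℕ → ℕ)

/-- number of vertices at level `i` -/
def cnt (i : ℕ) : ℕ := if i = 0 then 1 else max 1 (l i)

lemma cnt_pos (i : ℕ) : 0 < cnt l i := by
  unfold cnt; split <;> simp

lemma cnt_zero : cnt l 0 = 1 := rfl

lemma cnt_of_pos {i : ℕ} (hi : 1 ≤ i) (h : 0 < l i) : cnt l i = l i := by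
  unfold cnt
  rw [if_neg (by omega)]
  omega

/-- the quiver: vertices `(i, j)` with `i ≤ k`, `j < cnt i`; edges `(i,j)` with
`1 ≤ i ≤ k`, `j < cnt i`, from `(i,j)` to `(i-1,0)`. -/
def G : Quiv where
  V := {p : ℕ × ℕ // p.1 ≤ k ∧ p.2 < cnt l p.1}
  E := {p : ℕ × ℕ // 1 ≤ p.1 ∧ p.1 ≤ k ∧ p.2 < cnt l p.1}
  src e := ⟨e.1, e.2.2.1, e.2.2.2⟩
  rng e := ⟨(e.1.1 - 1, 0), le_trans (Nat.sub_le _ _) e.2.2.1, cnt_pos l _⟩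

def v : (G k l).V := ⟨(0, 0), Nat.zero_le _, cnt_pos l 0⟩

/-- canonical path of length `n` ending at `v`, starting at `(n, j)`. -/
def canonE : (n : ℕ) → (j : ℕ) → n ≤ k → j < cnt l n → List (G k l).E
  | 0, _, _, _ => []
  | n + 1, j, h, hj =>
      ⟨(n + 1, j), Nat.succ_pos n, h, hj⟩ ::
        canonE n 0 (Nat.le_of_succ_le h) (cnt_pos l n)

lemma canonE_succ (m j : ℕ) (h : m + 1 ≤ k) (hj : j < cnt l (m + 1)) :
    canonE k l (m + 1) j h hj =
      ⟨(m + 1, j), Nat.succ_pos m, h, hj⟩ ::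
        canonE k l m 0 (Nat.le_of_succ_le h) (cnt_pos l m) := rfl

lemma canonE_length (n : ℕ) : ∀ (j : ℕ) (h : n ≤ k) (hj : j < cnt l n),
    (canonE k l n j h hj).length = n := by
  induction n with
  | zero => intro _ _ _; rfl
  | succ m ih =>
      intro j h hj
      rw [canonE_succ]; exact congrArg Nat.succ (ih _ _ _)

lemma canonE_head (m j : ℕ) (h : m + 1 ≤ k) (hj : j < cnt l (m + 1)) :
    (canonE k l (m + 1) j h hj).head? = some ⟨(m + 1, j), Nat.succ_pos m, h, hj⟩ := rfl

def start (n j : ℕ) (h : n ≤ k) (hj : j < cnt l n) : (G k l).V := ⟨(n, j), h, hj⟩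

lemma canonE_path (n : ℕ) : ∀ (j : ℕ) (h : n ≤ k) (hj : j < cnt l n),
    (G k l).IsPathFromTo (start k l n j h hj) (canonE k l n j h hj) (v k l) := by
  induction n with
  | zero =>
      intro j h hj
      refine ⟨List.isChain_nil, fun _ => ?_, by intro e he; simp [canonE] at he,
        by intro e he; simp [canonE] at he⟩
      have hj0 : j = 0 := by have := hj; rw [cnt_zero] at this; omega
      subst hj0; rfl
  | succ m ih =>
      intro j h hj
      obtain ⟨hch, hnil, hhead, hlast⟩ := ih 0 (Nat.le_of_succ_le h) (cnt_pos l m)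
      rw [canonE_succ]
      refine ⟨?_, by simp, ?_, ?_⟩
      · apply List.isChain_cons.mpr
        refine ⟨fun y hy => ?_, hch⟩
        rw [hhead y hy]
        apply Subtype.ext
        show ((m + 1 : ℕ) - 1, 0) = ((m : ℕ), (0 : ℕ))
        simp
      · intro e he
        replace he := Option.some.inj he
        subst he; rfl
      · intro e he
        rcases m with _ | m'
        · simp only [canonE, List.getLast?_singleton, Option.some.injEq] at he
          replace he := Option.some.inj he
          subst he
          apply Subtype.ext
          rfl
        · exact hlast e he

lemma canonE_isPathTo (n j : ℕ) (h : n ≤ k) (hj : j < cnt l n) :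
    (G k l).IsPathTo (canonE k l n j h hj) (v k l) :=
  ⟨_, canonE_path k l n j h hj⟩

lemma path_to_v (es : List (G k l).E) (hp : (G k l).IsPathTo es (v k l)) :
    ∃ (hk : es.length ≤ k) (j : ℕ) (hj : j < cnt l es.length),
      es = canonE k l es.length j hk hj := by
  induction es with
  | nil => exact ⟨Nat.zero_le _, 0, by rw [List.length_nil, cnt_zero]; omega, rfl⟩
  | cons e rest ih =>
      obtain ⟨u, hch, -, hhead, hlast⟩ := hp
      rcases rest with _ | ⟨f, rest'⟩
      · -- single edge
        have he : (G k l).rng e = v k l := hlast e rfl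
        have he1 : e.1.1 - 1 = 0 := congrArg (fun w => w.1.1) he
        have h1 : e.1.1 = 1 := by have := e.2.1; omega
        have hkk : (1 : ℕ) ≤ k := by have := e.2.2.1; omega
        have hj2 : e.1.2 < cnt l 1 := by
          have h5 := e.2.2.2; rw [h1] at h5; exact h5
        refine ⟨hkk, e.1.2, hj2, ?_⟩
        show [e] = canonE k l (0 + 1) e.1.2 hkk hj2
        rw [canonE_succ]
        show [e] = [⟨(1, e.1.2), Nat.succ_pos 0, hkk, hj2⟩]
        have he2 : e = (⟨(1, e.1.2), Nat.succ_pos 0, hkk, hj2⟩ : (G k l).E) :=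
          Subtype.ext (Prod.ext h1 rfl)
        exact congrArg (fun x => [x]) he2
      · -- at least two edges
        have hrest : (G k l).IsPathTo (f :: rest') (v k l) := by
          refine ⟨(G k l).src f, (List.isChain_cons_cons.mp hch).2, by simp, ?_, ?_⟩
          · intro e' he'
            simp only [List.head?_cons, Option.some.injEq] at he'
            subst he'; rfl
          · intro e' he'
            exact hlast e' (by rw [List.getLast?_cons_cons]; exact he')
        obtain ⟨hk', j', hj', heq⟩ := ih hrest
        have hef : (G k l).rng e = (G k l).src f := (List.isChain_cons_cons.mp hch).1
        have hfval : ((e.1.1 - 1 : ℕ), (0 : ℕ)) = f.1 := congrArg Subtype.val hef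
        have hk'' : rest'.length + 1 ≤ k := hk'
        have hj'' : j' < cnt l (rest'.length + 1) := hj'
        have heq2 : f :: rest' = canonE k l (rest'.length + 1) j' hk'' hj'' := heq
        have hfhead : f = ⟨(rest'.length + 1, j'), Nat.succ_pos _, hk'', hj''⟩ := by
          have h2 := congrArg List.head? heq2
          rw [canonE_head] at h2
          exact Option.some.inj h2
        have hf1 : f.1.1 = rest'.length + 1 := by rw [hfhead]
        have hf2 : f.1.2 = j' := by rw [hfhead]
        have hj'0 : j' = 0 := by
          rw [← hf2]
          exact (congrArg Prod.snd hfval).symm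
        have he1 : e.1.1 = rest'.length + 2 := by
          have h3 : e.1.1 - 1 = rest'.length + 1 := by
            rw [← hf1]; exact congrArg Prod.fst hfval
          have := e.2.1; omega
        have hk2 : (rest'.length + 2 : ℕ) ≤ k := by
          have := e.2.2.1; omega
        have hj3 : e.1.2 < cnt l (rest'.length + 2) := by
          have h5 := e.2.2.2; rw [he1] at h5; exact h5
        refine ⟨hk2, e.1.2, hj3, ?_⟩
        show e :: f :: rest' = canonE k l (rest'.length + 1 + 1) e.1.2 hk2 hj3
        rw [canonE_succ]
        have heeq : e = (⟨(rest'.length + 2, e.1.2), Nat.succ_pos _, hk2, hj3⟩ :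
            (G k l).E) := by
          exact Subtype.ext (Prod.ext he1 rfl)
        rw [← heeq]
        congr 1
        rw [heq2]
        subst hj'0
        rfl

lemma level_lt {u w : (G k l).V} {es : List (G k l).E}
    (hp : (G k l).IsPathFromTo u es w) (hne : es ≠ []) : w.1.1 < u.1.1 := by
  induction es generalizing u with
  | nil => exact absurd rfl hne
  | cons e rest ih =>
      obtain ⟨hch, -, hhead, hlast⟩ := hp
      have hu : (G k l).src e = u := hhead e rfl
      have hu1 : u.1.1 = e.1.1 := by rw [← hu]; rfl
      rcases rest with _ | ⟨f, rest'⟩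
      · have hw : (G k l).rng e = w := hlast e rfl
        have : w.1.1 = e.1.1 - 1 := by rw [← hw]; rfl
        have := e.2.1; omega
      · have hef : (G k l).rng e = (G k l).src f := (List.isChain_cons_cons.mp hch).1
        have hrest : (G k l).IsPathFromTo ((G k l).src f) (f :: rest') w := by
          refine ⟨(List.isChain_cons_cons.mp hch).2, by simp, ?_, ?_⟩
          · intro e' he'; simp at he'; subst he'; rfl
          · intro e' he'; exact hlast e' (by rw [List.getLast?_cons_cons]; exact he')
        have hlt := ih hrest (by simp)
        have : ((G k l).src f).1.1 = e.1.1 - 1 := by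
          rw [← hef]; rfl
        have := e.2.1
        omega

lemma path_to_v' (es : List (G k l).E) (hp : (G k l).IsPathTo es (v k l)) :
    ∃ (n : ℕ) (hk : n ≤ k) (j : ℕ) (hj : j < cnt l n),
      es.length = n ∧ es = canonE k l n j hk hj := by
  obtain ⟨hk, j, hj, heq⟩ := path_to_v k l es hp
  exact ⟨es.length, hk, j, hj, rfl, heq⟩

/-- index of the first edge of a path -/
def idx (es : List (G k l).E) : ℕ := (es.head?.map (fun e => e.1.2)).getD 0

lemma idx_nil : idx k l [] = 0 := rfl

lemma idx_canonE (m j : ℕ) (h : m + 1 ≤ k) (hj : j < cnt l (m + 1)) :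
    idx k l (canonE k l (m + 1) j h hj) = j := rfl

lemma nil_path : (G k l).IsPathTo [] (v k l) :=
  ⟨v k l, List.isChain_nil, fun _ => rfl, by simp, by simp⟩

lemma path_ext (es₁ es₂ : List (G k l).E)
    (h₁ : (G k l).IsPathTo es₁ (v k l)) (h₂ : (G k l).IsPathTo es₂ (v k l))
    (hlen : es₁.length = es₂.length) (hidx : idx k l es₁ = idx k l es₂) :
    es₁ = es₂ := by
  obtain ⟨n₁, hk₁, j₁, hj₁, hl₁, heq₁⟩ := path_to_v' k l es₁ h₁
  obtain ⟨n₂, hk₂, j₂, hj₂, hl₂, heq₂⟩ := path_to_v' k l es₂ h₂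
  have hn : n₁ = n₂ := by omega
  subst hn
  rcases n₁ with _ | m
  · exact heq₁.trans heq₂.symm
  · rw [heq₁, heq₂, idx_canonE, idx_canonE] at hidx
    subst hidx
    exact heq₁.trans heq₂.symm

end Stmt8Aux

/-- For every `k ≥ 0` and positive `l 1, …, l k` there is a finite acyclic quiver
with a unique sink `v` having exactly `l i` paths of length `i` ending at `v` for
`1 ≤ i ≤ k`, no longer paths, a unique (trivial) path of length `0`, and hence
`1 + l 1 + … + l k` paths ending at `v` in total. -/
theorem stmt8 (k : ℕ) (l : ℕ → ℕ) (hl : ∀ i, 1 ≤ i → i ≤ k → 0 < l i) :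
    ∃ (G : Quiv) (v : G.V), Finite G.V ∧ Finite G.E ∧
      (∀ es : List G.E, ¬ G.IsCycle es) ∧
      G.IsSink v ∧ (∀ w, G.IsSink w → w = v) ∧
      (∀ es, G.IsPathTo es v → es.length = 0 → es = []) ∧
      (∀ i, 1 ≤ i → i ≤ k → {es | G.IsPathTo es v ∧ es.length = i}.ncard = l i) ∧
      (∀ es, G.IsPathTo es v → es.length ≤ k) ∧
      {es | G.IsPathTo es v}.ncard = 1 + ∑ i ∈ Finset.Icc 1 k, l i := by
  classical
  open Stmt8Aux in
  refine ⟨G k l, v k l, ?_, ?_, ?_, ?_, ?_, ?_, ?_, ?_, ?_⟩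
  · -- Finite V
    set N := (Finset.range (k + 1)).sup (cnt l) with hN
    refine Finite.of_injective (fun p : (G k l).V =>
      ((⟨p.1.1, Nat.lt_succ_of_le p.2.1⟩ : Fin (k + 1)),
       (⟨p.1.2, lt_of_lt_of_le p.2.2
          (Finset.le_sup (Finset.mem_range.mpr (Nat.lt_succ_of_le p.2.1)))⟩ : Fin N)))
      (fun a b h => ?_)
    exact Subtype.ext (Prod.ext (congrArg (fun q => (q.1 : ℕ)) h)
      (congrArg (fun q => (q.2 : ℕ)) h))
  · -- Finite E
    set N := (Finset.range (k + 1)).sup (cnt l) with hN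
    refine Finite.of_injective (fun p : (G k l).E =>
      ((⟨p.1.1, Nat.lt_succ_of_le p.2.2.1⟩ : Fin (k + 1)),
       (⟨p.1.2, lt_of_lt_of_le p.2.2.2
          (Finset.le_sup (Finset.mem_range.mpr (Nat.lt_succ_of_le p.2.2.1)))⟩ : Fin N)))
      (fun a b h => ?_)
    exact Subtype.ext (Prod.ext (congrArg (fun q => (q.1 : ℕ)) h)
      (congrArg (fun q => (q.2 : ℕ)) h))
  · -- acyclic
    rintro es ⟨hne, ⟨u, hp⟩, -⟩
    exact absurd (level_lt k l hp hne) (lt_irrefl _)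
  · -- v is a sink
    intro e he
    have : e.1.1 = 0 := congrArg (fun w => w.1.1) he
    have := e.2.1
    omega
  · -- unique sink
    intro w hw
    by_cases h0 : w.1.1 = 0
    · have : w.1.2 < cnt l 0 := by
        have h5 := w.2.2; rw [h0] at h5; exact h5
      rw [cnt_zero] at this
      apply Subtype.ext
      apply Prod.ext h0
      show w.1.2 = 0
      omega
    · exfalso
      have h1 : 1 ≤ w.1.1 := by omega
      exact hw ⟨w.1, h1, w.2.1, w.2.2⟩ (Subtype.ext rfl)
  · -- unique trivial path
    intro es _ hlen
    exact List.length_eq_zero_iff.mp hlen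
  · -- counts
    intro i hi1 hik
    obtain ⟨m, rfl⟩ : ∃ m, i = m + 1 := ⟨i - 1, by omega⟩
    have hinj : Set.InjOn (idx k l)
        {es | (G k l).IsPathTo es (v k l) ∧ es.length = m + 1} := by
      rintro es₁ ⟨hp₁, hl₁⟩ es₂ ⟨hp₂, hl₂⟩ h
      exact path_ext k l es₁ es₂ hp₁ hp₂ (by omega) h
    have himg : idx k l '' {es | (G k l).IsPathTo es (v k l) ∧ es.length = m + 1}
        = Set.Iio (cnt l (m + 1)) := by
      apply Set.eq_of_subset_of_subset
      · rintro x ⟨es, ⟨hp, hlen⟩, rfl⟩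
        obtain ⟨n, hk, j, hj, hln, heq⟩ := path_to_v' k l es hp
        have hn : n = m + 1 := by omega
        subst hn
        rw [heq, idx_canonE]
        exact hj
      · intro j hj
        refine ⟨canonE k l (m + 1) j hik hj, ⟨canonE_isPathTo k l (m + 1) j hik hj,
          canonE_length k l (m + 1) j hik hj⟩, idx_canonE k l m j hik hj⟩
    calc {es | (G k l).IsPathTo es (v k l) ∧ es.length = m + 1}.ncard
        = (idx k l '' {es | (G k l).IsPathTo es (v k l) ∧ es.length = m + 1}).ncard :=
          (Set.ncard_image_of_injOn hinj).symm
      _ = (Set.Iio (cnt l (m + 1))).ncard := by rw [himg]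
      _ = cnt l (m + 1) := by
          rw [← Finset.coe_Iio, Set.ncard_coe_finset, Nat.card_Iio]
      _ = l (m + 1) := cnt_of_pos l hi1 (hl (m + 1) hi1 hik)
  · -- no long paths
    intro es hp
    obtain ⟨hk, -, -, -⟩ := path_to_v k l es hp
    exact hk
  · -- total count
    set T := {es | (G k l).IsPathTo es (v k l)} with hT
    set Φ : List (G k l).E → ℕ × ℕ := fun es => (es.length, idx k l es) with hΦ
    have hinj : Set.InjOn Φ T := by
      intro es₁ hp₁ es₂ hp₂ h
      exact path_ext k l es₁ es₂ hp₁ hp₂ (congrArg Prod.fst h) (congrArg Prod.snd h)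
    set F : Finset (ℕ × ℕ) := insert ((0 : ℕ), (0 : ℕ))
      ((Finset.Icc 1 k).biUnion
        (fun i => (Finset.range (cnt l i)).image (fun j => (i, j)))) with hF
    have hmem : ∀ p : ℕ × ℕ, p ∈ F ↔
        (p = (0, 0) ∨ (1 ≤ p.1 ∧ p.1 ≤ k ∧ p.2 < cnt l p.1)) := by
      intro p
      simp only [hF, Finset.mem_insert, Finset.mem_biUnion, Finset.mem_Icc,
        Finset.mem_image, Finset.mem_range]
      constructor
      · rintro (h | ⟨i, ⟨hi1, hi2⟩, j, hj, rfl⟩)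
        · exact Or.inl h
        · exact Or.inr ⟨hi1, hi2, hj⟩
      · rintro (h | ⟨h1, h2, h3⟩)
        · exact Or.inl h
        · exact Or.inr ⟨p.1, ⟨h1, h2⟩, p.2, h3, rfl⟩
    have himg : Φ '' T = ↑F := by
      apply Set.eq_of_subset_of_subset
      · rintro x ⟨es, hp, rfl⟩
        obtain ⟨n, hk, j, hj, hln, heq⟩ := path_to_v' k l es hp
        rw [Finset.mem_coe, hmem]
        rcases n with _ | m
        · left
          have : es = [] := List.length_eq_zero_iff.mp hln
          subst this
          rfl
        · right
          refine ⟨?_, ?_, ?_⟩ <;> simp only [hΦ]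
          · omega
          · rw [hln]; exact hk
          · rw [hln, heq, idx_canonE]; exact hj
      · rintro ⟨i, j⟩ hp
        rw [Finset.mem_coe, hmem] at hp
        rcases hp with h | ⟨h1, h2, h3⟩
        · exact ⟨[], nil_path k l, by rw [h]; rfl⟩
        · have h1' : 1 ≤ i := h1
          have h2' : i ≤ k := h2
          have h3' : j < cnt l i := h3
          obtain ⟨m, rfl⟩ : ∃ m, i = m + 1 := ⟨i - 1, by omega⟩
          refine ⟨canonE k l (m + 1) j h2' h3', canonE_isPathTo k l (m + 1) j h2' h3', ?_⟩
          simp only [hΦ]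
          rw [canonE_length, idx_canonE]
    have hcard : F.card = 1 + ∑ i ∈ Finset.Icc 1 k, l i := by
      rw [hF, Finset.card_insert_of_notMem, Finset.card_biUnion]
      · rw [Nat.add_comm]
        congr 1
        apply Finset.sum_congr rfl
        intro i hi
        rw [Finset.card_image_of_injective _ (fun a b h => by
          simpa using congrArg Prod.snd h), Finset.card_range]
        rw [Finset.mem_Icc] at hi
        exact cnt_of_pos l hi.1 (hl i hi.1 hi.2)
      · intro x hx y hy hxy
        rw [Function.onFun, Finset.disjoint_left]
        rintro a ha hb
        simp only [Finset.mem_image, Finset.mem_range] at ha hb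
        obtain ⟨j₁, -, rfl⟩ := ha
        obtain ⟨j₂, -, h⟩ := hb
        exact hxy (congrArg Prod.fst h).symm
      · intro h0
        rw [Finset.mem_biUnion] at h0
        obtain ⟨i, hi, hmem0⟩ := h0
        rw [Finset.mem_image] at hmem0
        obtain ⟨j, -, hj⟩ := hmem0
        rw [Finset.mem_Icc] at hi
        have h5 := congrArg Prod.fst hj
        simp only [] at h5
        omega
    calc T.ncard = (Φ '' T).ncard := (Set.ncard_image_of_injOn hinj).symm
      _ = F.card := by rw [himg, Set.ncard_coe_finset]
      _ = 1 + ∑ i ∈ Finset.Icc 1 k, l i := hcard
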